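/- arXiv:1504.01014 — 2 statements merged into one kernel-verified Lean document; each statement's English description precedes it below -/
import Mathlib

section
/- Let Φ be an m×N complex matrix satisfying the (k,δ)-restricted isometry property for some δ < 1/3. Then Φ satisfies the (k,3)-width property, i.e., ‖x‖₂ ≤ (3/√k)·‖x‖₁ for every x in the nullspace of Φ. -/
open scoped BigOperators

/-- Number of nonzero entries ("0-norm"). -/
noncomputable def norm0 {N : Type*} (x : N → ℂ) : ℕ := Nat.card {i // x i ≠ 0}

/-- The 1-norm. -/
noncomputable def norm1 {N : Type*} [Fintype N] (x : N → ℂ) : ℝ := ∑ i, ‖x i‖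

/-- The squared 2-norm. -/
noncomputable def norm2sq {N : Type*} [Fintype N] (x : N → ℂ) : ℝ := ∑ i, ‖x i‖ ^ 2

/-- Numerical sparsity: `ns x = ‖x‖₁² / ‖x‖₂²`. -/
noncomputable def ns {N : Type*} [Fintype N] (x : N → ℂ) : ℝ := norm1 x ^ 2 / norm2sq x

/-- The unitary discrete Fourier transform on `ℂ^(ZMod n)`. -/
noncomputable def dft (n : ℕ) [NeZero n] (x : ZMod n → ℂ) : ZMod n → ℂ := fun k =>
  (1 / Real.sqrt n : ℝ) *
    ∑ j : ZMod n, x j *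
      Complex.exp (-(2 * (Real.pi : ℂ) * Complex.I * (j.val : ℂ) * (k.val : ℂ)) / (n : ℂ))
/-- `Φ` satisfies the `(k,δ)`-restricted isometry property:
`(1−δ)‖x‖₂² ≤ ‖Φx‖₂² ≤ (1+δ)‖x‖₂²` for all `k`-sparse `x`. -/
def RIP {M N : Type*} [Fintype M] [Fintype N] (Φ : Matrix M N ℂ) (k : ℕ) (δ : ℝ) : Prop :=
  ∀ x : N → ℂ, norm0 x ≤ k →
    (1 - δ) * norm2sq x ≤ norm2sq (Φ.mulVec x) ∧ norm2sq (Φ.mulVec x) ≤ (1 + δ) * norm2sq x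

attribute [local instance] Classical.propDecidable

section lemmas
variable {N : Type*} [Fintype N]

lemma norm2sq_nonneg (x : N → ℂ) : 0 ≤ norm2sq x :=
  Finset.sum_nonneg fun _ _ => sq_nonneg _

lemma norm1_nonneg (x : N → ℂ) : 0 ≤ norm1 x :=
  Finset.sum_nonneg fun _ _ => norm_nonneg _

lemma norm0_eq (x : N → ℂ) : norm0 x = (Finset.univ.filter (fun i => x i ≠ 0)).card := by
  simp [norm0, Nat.card_eq_fintype_card, Fintype.card_subtype]

lemma sqrt_norm2sq_add_le (a b : N → ℂ) :
    Real.sqrt (norm2sq (a + b)) ≤ Real.sqrt (norm2sq a) + Real.sqrt (norm2sq b) := by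
  have h := norm_add_le (WithLp.toLp 2 a) (WithLp.toLp 2 b)
  simp only [EuclideanSpace.norm_eq, ← WithLp.toLp_add] at h
  simpa [norm2sq] using h

lemma norm2sq_neg (a : N → ℂ) : norm2sq (-a) = norm2sq a := by
  simp [norm2sq]

/-- Existence of a "top-k" set. -/
lemma exists_top (y : N → ℂ) (k : ℕ)
    (h : k ≤ (Finset.univ.filter (fun i => y i ≠ 0)).card) :
    ∃ S : Finset N, S ⊆ Finset.univ.filter (fun i => y i ≠ 0) ∧ S.card = k ∧
      ∀ i ∈ S, ∀ j ∉ S, ‖y j‖ ≤ ‖y i‖ := by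
  induction k with
  | zero => exact ⟨∅, by simp, rfl, by simp⟩
  | succ k ih =>
    obtain ⟨S, hS1, hS2, hS3⟩ := ih (le_trans (Nat.le_succ k) h)
    have hne : ((Finset.univ.filter (fun i => y i ≠ 0)) \ S).Nonempty := by
      rw [← Finset.card_pos, Finset.card_sdiff_of_subset hS1]
      omega
    obtain ⟨i0, hi0, hmax⟩ := Finset.exists_max_image _ (fun i => ‖y i‖) hne
    have hi0S : i0 ∉ S := (Finset.mem_sdiff.mp hi0).2
    refine ⟨insert i0 S, ?_, by rw [Finset.card_insert_of_notMem hi0S, hS2], ?_⟩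
    · intro j hj
      rcases Finset.mem_insert.mp hj with rfl | hj
      · exact (Finset.mem_sdiff.mp hi0).1
      · exact hS1 hj
    · intro i hi j hj
      have hjS : j ∉ S := fun hjS => hj (Finset.mem_insert_of_mem hjS)
      rcases Finset.mem_insert.mp hi with rfl | hi
      · by_cases hjsupp : y j = 0
        · simp [hjsupp]
        · exact hmax j (Finset.mem_sdiff.mpr ⟨Finset.mem_filter.mpr ⟨Finset.mem_univ j, hjsupp⟩, hjS⟩)
      · exact hS3 i hi j hjS

end lemmas

section main
variable {M N : Type*} [Fintype M] [Fintype N]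

/-- sparse bound -/
lemma sparse_bound (Φ : Matrix M N ℂ) (k : ℕ) (δ : ℝ) (hrip : RIP Φ k δ)
    (h1δ : 0 ≤ 1 + δ) (y : N → ℂ) (β : ℝ) (hβ : 0 ≤ β)
    (hcard : (Finset.univ.filter (fun i => y i ≠ 0)).card ≤ k)
    (hb : ∀ i, ‖y i‖ ≤ β) :
    Real.sqrt (norm2sq (Φ.mulVec y)) ≤ Real.sqrt (1 + δ) * (Real.sqrt k * β) := by
  have h0 : norm0 y ≤ k := by rw [norm0_eq]; exact hcard
  have h2 : norm2sq (Φ.mulVec y) ≤ (1 + δ) * norm2sq y := (hrip y h0).2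
  have hy : norm2sq y ≤ k * β ^ 2 := by
    have he : norm2sq y = ∑ i ∈ Finset.univ.filter (fun i => y i ≠ 0), ‖y i‖ ^ 2 := by
      rw [norm2sq, Finset.sum_filter_of_ne]
      exact fun i _ hne h0' => hne (by simp [h0'])
    rw [he]
    calc ∑ i ∈ Finset.univ.filter (fun i => y i ≠ 0), ‖y i‖ ^ 2
        ≤ ∑ i ∈ Finset.univ.filter (fun i => y i ≠ 0), β ^ 2 :=
          Finset.sum_le_sum fun i _ => by nlinarith [hb i, norm_nonneg (y i)]
      _ = (Finset.univ.filter (fun i => y i ≠ 0)).card * β ^ 2 := by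
          rw [Finset.sum_const, nsmul_eq_mul]
      _ ≤ k * β ^ 2 :=
          mul_le_mul_of_nonneg_right (by exact_mod_cast hcard) (sq_nonneg β)
  calc Real.sqrt (norm2sq (Φ.mulVec y)) ≤ Real.sqrt ((1 + δ) * (k * β ^ 2)) :=
        Real.sqrt_le_sqrt (le_trans h2 (mul_le_mul_of_nonneg_left hy h1δ))
    _ = Real.sqrt (1 + δ) * (Real.sqrt k * β) := by
        rw [Real.sqrt_mul h1δ, Real.sqrt_mul (Nat.cast_nonneg k), Real.sqrt_sq hβ]

/-- key shelling lemma -/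
lemma key_lemma (Φ : Matrix M N ℂ) (k : ℕ) (δ : ℝ) (hrip : RIP Φ k δ)
    (h1δ : 0 ≤ 1 + δ) (hk : 1 ≤ k) :
    ∀ n : ℕ, ∀ y : N → ℂ, (Finset.univ.filter (fun i => y i ≠ 0)).card ≤ n →
      ∀ β : ℝ, 0 ≤ β → (∀ i, ‖y i‖ ≤ β) →
      Real.sqrt (norm2sq (Φ.mulVec y)) ≤
        Real.sqrt (1 + δ) * (Real.sqrt k * β + norm1 y / Real.sqrt k) := by
  have hk0 : (0:ℝ) < k := by exact_mod_cast hk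
  have hsk : (0:ℝ) < Real.sqrt k := Real.sqrt_pos.mpr hk0
  intro n
  induction n with
  | zero =>
    intro y hcard β hβ hb
    have h := sparse_bound Φ k δ hrip h1δ y β hβ (le_trans hcard (Nat.zero_le k)) hb
    refine le_trans h ?_
    have h1 : 0 ≤ norm1 y / Real.sqrt k := div_nonneg (norm1_nonneg y) hsk.le
    nlinarith [Real.sqrt_nonneg (1 + δ)]
  | succ n ih =>
    intro y hcard β hβ hb
    by_cases hsmall : (Finset.univ.filter (fun i => y i ≠ 0)).card ≤ k
    · have h := sparse_bound Φ k δ hrip h1δ y β hβ hsmall hb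
      refine le_trans h ?_
      have h1 : 0 ≤ norm1 y / Real.sqrt k := div_nonneg (norm1_nonneg y) hsk.le
      nlinarith [Real.sqrt_nonneg (1 + δ)]
    · push_neg at hsmall
      obtain ⟨S, hS1, hS2, hS3⟩ := exists_top y k hsmall.le
      set y₁ : N → ℂ := fun i => if i ∈ S then y i else 0 with hy₁
      set y₂ : N → ℂ := fun i => if i ∈ S then 0 else y i with hy₂
      have hsum : y = y₁ + y₂ := by
        funext i; simp only [hy₁, hy₂, Pi.add_apply]; split <;> simp
      have hsupp2 : (Finset.univ.filter (fun i => y₂ i ≠ 0)) =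
          (Finset.univ.filter (fun i => y i ≠ 0)) \ S := by
        ext i
        simp only [Finset.mem_filter, Finset.mem_sdiff, Finset.mem_univ, true_and, hy₂]
        by_cases hi : i ∈ S <;> simp [hi]
      have hcard2 : (Finset.univ.filter (fun i => y₂ i ≠ 0)).card ≤ n := by
        rw [hsupp2, Finset.card_sdiff_of_subset hS1, hS2]
        omega
      have hsupp1 : (Finset.univ.filter (fun i => y₁ i ≠ 0)) ⊆ S := by
        intro i hi
        simp only [Finset.mem_filter, hy₁] at hi
        by_contra hiS
        simp [hiS] at hi
      have hn11 : norm1 y₁ = ∑ i ∈ S, ‖y i‖ := by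
        rw [norm1, ← Finset.sum_subset (Finset.subset_univ S)
          (fun i _ hiS => by simp [hy₁, hiS])]
        exact Finset.sum_congr rfl fun i hi => by simp [hy₁, hi]
      have hn11_nonneg : 0 ≤ norm1 y₁ := norm1_nonneg y₁
      have hb2 : ∀ i, ‖y₂ i‖ ≤ norm1 y₁ / k := by
        intro i
        by_cases hi : i ∈ S
        · simp only [hy₂, hi, if_true, norm_zero]
          exact div_nonneg hn11_nonneg hk0.le
        · simp only [hy₂, hi, if_false]
          rw [le_div_iff₀ hk0]
          have he : ‖y i‖ * k = ∑ _j ∈ S, ‖y i‖ := by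
            rw [Finset.sum_const, hS2, nsmul_eq_mul, mul_comm]
          rw [he, hn11]
          exact Finset.sum_le_sum fun j hj => hS3 j hj i hi
      have hβ2 : 0 ≤ norm1 y₁ / k := div_nonneg hn11_nonneg hk0.le
      have hb1 : ∀ i, ‖y₁ i‖ ≤ β := by
        intro i
        by_cases hi : i ∈ S <;> simp only [hy₁, hi, if_true, if_false, norm_zero]
        · exact hb i
        · exact hβ
      -- apply bounds
      have h1 : Real.sqrt (norm2sq (Φ.mulVec y₁)) ≤ Real.sqrt (1 + δ) * (Real.sqrt k * β) :=
        sparse_bound Φ k δ hrip h1δ y₁ β hβ (le_trans (Finset.card_le_card hsupp1) hS2.le) hb1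
      have h2 := ih y₂ hcard2 (norm1 y₁ / k) hβ2 hb2
      have htri : Real.sqrt (norm2sq (Φ.mulVec y)) ≤
          Real.sqrt (norm2sq (Φ.mulVec y₁)) + Real.sqrt (norm2sq (Φ.mulVec y₂)) := by
        rw [hsum, Matrix.mulVec_add]
        exact sqrt_norm2sq_add_le _ _
      have hnorm1 : norm1 y = norm1 y₁ + norm1 y₂ := by
        rw [norm1, norm1, norm1, ← Finset.sum_add_distrib]
        refine Finset.sum_congr rfl fun i _ => ?_
        by_cases hi : i ∈ S <;> simp [hy₁, hy₂, hi]
      have hkey : Real.sqrt k * (norm1 y₁ / k) = norm1 y₁ / Real.sqrt k := by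
        rw [eq_div_iff hsk.ne', mul_comm (Real.sqrt k), mul_assoc, Real.mul_self_sqrt hk0.le,
          div_mul_cancel₀ _ hk0.ne']
      calc Real.sqrt (norm2sq (Φ.mulVec y)) ≤
            Real.sqrt (1 + δ) * (Real.sqrt k * β) +
            Real.sqrt (1 + δ) * (Real.sqrt k * (norm1 y₁ / k) + norm1 y₂ / Real.sqrt k) := by
            refine le_trans htri (add_le_add h1 h2)
        _ = Real.sqrt (1 + δ) * (Real.sqrt k * β + norm1 y / Real.sqrt k) := by
            rw [hkey, hnorm1, ← mul_add, add_div]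
end main

lemma width_arith (δ nh nt X B : ℝ) (hδ : δ < 1/3)
    (hsplit : X = nh + nt) (hnt2 : nt ≤ B)
    (h1 : (1 - δ) * nh ≤ (1 + δ) * (4 * B))
    (e1 : 0 ≤ (1/3 - δ) * nh) (e2 : 0 ≤ (1/3 - δ) * B) :
    X ≤ 9 * B := by linarith


/-- The `(k,δ)`-restricted isometry property with `δ < 1/3` implies the `(k,3)`-width
property: `‖x‖₂ ≤ (3/√k)‖x‖₁` for every `x` in the nullspace of `Φ`. -/
theorem RIP_implies_width {M N : Type*} [Fintype M] [Fintype N]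
    (Φ : Matrix M N ℂ) (k : ℕ) (δ : ℝ) (hk : 1 ≤ k) (hδ : δ < 1 / 3)
    (hrip : RIP Φ k δ) :
    ∀ x : N → ℂ, Φ.mulVec x = 0 → Real.sqrt (norm2sq x) ≤ 3 / Real.sqrt k * norm1 x := by
  have hk0 : (0:ℝ) < k := by exact_mod_cast hk
  have hsk : (0:ℝ) < Real.sqrt k := Real.sqrt_pos.mpr hk0
  intro x hx
  by_cases hx0 : x = 0
  · subst hx0
    simp [norm2sq, norm1]
  · obtain ⟨i0, hi0⟩ : ∃ i, x i ≠ 0 := by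
      by_contra hcon
      push_neg at hcon
      exact hx0 (funext hcon)
    -- 0 ≤ 1 + δ
    have h1δ : 0 ≤ 1 + δ := by
      set e : N → ℂ := fun j => if j = i0 then 1 else 0 with he
      have h0e : norm0 e ≤ k := by
        rw [norm0_eq]
        refine le_trans (le_trans (Finset.card_le_card (fun j hj => ?_)) (Finset.card_singleton i0).le) hk
        simp only [Finset.mem_filter, he] at hj
        simp only [Finset.mem_singleton]
        by_contra hji
        simp [hji] at hj
      have h2e : norm2sq e = 1 := by
        rw [norm2sq]
        calc ∑ j, ‖e j‖ ^ 2 = ∑ j, if j = i0 then (1:ℝ) else 0 :=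
              Finset.sum_congr rfl fun j _ => by by_cases hj : j = i0 <;> simp [he, hj]
          _ = 1 := by simp
      have := (hrip e h0e).2
      rw [h2e, mul_one] at this
      linarith [norm2sq_nonneg (Φ.mulVec e)]
    set A := norm1 x with hA
    have hApos : 0 < A := by
      have h1 : ‖x i0‖ ≤ A := by
        rw [hA, norm1]
        exact Finset.single_le_sum (fun i _ => norm_nonneg (x i)) (Finset.mem_univ i0)
      have h2 : 0 < ‖x i0‖ := norm_pos_iff.mpr hi0
      linarith
    have hAk : 0 < A / k := div_pos hApos hk0
    set T : Finset N := Finset.univ.filter (fun i => A / k < ‖x i‖) with hT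
    have hTcard : T.card ≤ k := by
      have hlb : (T.card : ℝ) * (A / k) ≤ ∑ i ∈ T, ‖x i‖ := by
        rw [← nsmul_eq_mul]
        exact Finset.card_nsmul_le_sum T _ _ fun i hi =>
          (le_of_lt (Finset.mem_filter.mp hi).2)
      have hub : ∑ i ∈ T, ‖x i‖ ≤ A := by
        rw [hA, norm1]
        exact Finset.sum_le_sum_of_subset_of_nonneg (Finset.subset_univ T)
          (fun i _ _ => norm_nonneg (x i))
      have : (T.card : ℝ) ≤ k := by
        rw [← mul_le_mul_iff_left₀ hAk]
        calc (T.card : ℝ) * (A / k) ≤ A := le_trans hlb hub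
          _ = k * (A / k) := by field_simp
      exact_mod_cast this
    set h : N → ℂ := fun i => if i ∈ T then x i else 0 with hh
    set t : N → ℂ := fun i => if i ∈ T then 0 else x i with ht
    have hsum : x = h + t := by
      funext i; simp only [hh, ht, Pi.add_apply]; split <;> simp
    have htb : ∀ i, ‖t i‖ ≤ A / k := by
      intro i
      by_cases hi : i ∈ T
      · simp only [ht, hi, if_true, norm_zero]; exact hAk.le
      · simp only [ht, hi, if_false]
        have := Finset.mem_filter.not.mp hi
        push_neg at this
        exact this (Finset.mem_univ i)
    have hnt1 : norm1 t ≤ A := by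
      rw [hA, norm1, norm1]
      refine Finset.sum_le_sum fun i _ => ?_
      by_cases hi : i ∈ T <;> simp [ht, hi, norm_nonneg]
    have hnt2 : norm2sq t ≤ A ^ 2 / k := by
      have : norm2sq t ≤ (A / k) * norm1 t := by
        rw [norm2sq, norm1, Finset.mul_sum]
        refine Finset.sum_le_sum fun i _ => ?_
        have h1 := htb i
        have h2 := norm_nonneg (t i)
        nlinarith
      calc norm2sq t ≤ (A / k) * norm1 t := this
        _ ≤ (A / k) * A := mul_le_mul_of_nonneg_left hnt1 hAk.le
        _ = A ^ 2 / k := by ring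
    have hsplit : norm2sq x = norm2sq h + norm2sq t := by
      rw [norm2sq, norm2sq, norm2sq, ← Finset.sum_add_distrib]
      refine Finset.sum_congr rfl fun i _ => ?_
      by_cases hi : i ∈ T <;> simp [hh, ht, hi]
    -- RIP lower bound on h
    have h0h : norm0 h ≤ k := by
      rw [norm0_eq]
      refine le_trans (Finset.card_le_card fun i hi => ?_) hTcard
      simp only [Finset.mem_filter, hh] at hi
      by_contra hiT
      simp [hiT] at hi
    have hlow : (1 - δ) * norm2sq h ≤ norm2sq (Φ.mulVec h) := (hrip h h0h).1
    -- Φ h = - Φ t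
    have hneg : Φ.mulVec h = -(Φ.mulVec t) := by
      have : Φ.mulVec h + Φ.mulVec t = 0 := by
        rw [← Matrix.mulVec_add, ← hsum, hx]
      linear_combination (norm := module) this
    have heq : norm2sq (Φ.mulVec h) = norm2sq (Φ.mulVec t) := by
      rw [hneg, norm2sq_neg]
    -- key lemma on t
    have hkey := key_lemma Φ k δ hrip h1δ hk (Finset.univ.filter (fun i => t i ≠ 0)).card t
      le_rfl (A / k) hAk.le htb
    have hkey2 : Real.sqrt (norm2sq (Φ.mulVec t)) ≤ Real.sqrt (1 + δ) * (2 * A / Real.sqrt k) := by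
      refine le_trans hkey (mul_le_mul_of_nonneg_left ?_ (Real.sqrt_nonneg _))
      have e1 : Real.sqrt k * (A / k) = A / Real.sqrt k := by
        rw [eq_div_iff hsk.ne', mul_comm (Real.sqrt k), mul_assoc, Real.mul_self_sqrt hk0.le,
          div_mul_cancel₀ _ hk0.ne']
      rw [e1]
      have e2 : norm1 t / Real.sqrt k ≤ A / Real.sqrt k := by
        apply div_le_div_of_nonneg_right hnt1 hsk.le
      rw [show 2 * A / Real.sqrt k = A / Real.sqrt k + A / Real.sqrt k by ring]
      linarith
    have hPt : norm2sq (Φ.mulVec t) ≤ (1 + δ) * (4 * A ^ 2 / k) := by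
      have e : norm2sq (Φ.mulVec t) = Real.sqrt (norm2sq (Φ.mulVec t)) ^ 2 :=
        (Real.sq_sqrt (norm2sq_nonneg _)).symm
      rw [e]
      calc Real.sqrt (norm2sq (Φ.mulVec t)) ^ 2
          ≤ (Real.sqrt (1 + δ) * (2 * A / Real.sqrt k)) ^ 2 := by
            apply pow_le_pow_left₀ (Real.sqrt_nonneg _) hkey2
        _ = (1 + δ) * (4 * A ^ 2 / k) := by
            rw [mul_pow, Real.sq_sqrt h1δ, div_pow, Real.sq_sqrt hk0.le]
            ring
    -- combine
    have hcomb : norm2sq x ≤ 9 * (A ^ 2 / k) := by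
      have hB : 0 ≤ A ^ 2 / k := div_nonneg (sq_nonneg A) hk0.le
      have h1 : (1 - δ) * norm2sq h ≤ (1 + δ) * (4 * A ^ 2 / k) := by
        rw [heq] at hlow; linarith
      have h1' : (1 - δ) * norm2sq h ≤ (1 + δ) * (4 * (A ^ 2 / (k:ℝ))) := by
        calc (1 - δ) * norm2sq h ≤ (1 + δ) * (4 * A ^ 2 / ↑k) := h1
          _ = (1 + δ) * (4 * (A ^ 2 / (k:ℝ))) := by ring
      exact width_arith δ (norm2sq h) (norm2sq t) (norm2sq x) (A ^ 2 / (k:ℝ)) hδ hsplit hnt2 h1'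
        (mul_nonneg (by linarith : (0:ℝ) ≤ 1/3 - δ) (norm2sq_nonneg h))
        (mul_nonneg (by linarith : (0:ℝ) ≤ 1/3 - δ) hB)
    have hfin : Real.sqrt (norm2sq x) ≤ Real.sqrt (9 * (A ^ 2 / k)) := Real.sqrt_le_sqrt hcomb
    have hfin2 : Real.sqrt (9 * (A ^ 2 / k)) = 3 / Real.sqrt k * A := by
      rw [show 9 * (A ^ 2 / k) = (3 / Real.sqrt k * A) ^ 2 by
        rw [mul_pow, div_pow, Real.sq_sqrt hk0.le]; ring]
      exact Real.sqrt_sq (by positivity)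
    rw [hfin2] at hfin
    exact hfin
end

section
/- Let n ≥ 1 and let x ∈ ℂ^(ZMod n) be the discrete Gaussian. Then x is fixed by the unitary discrete Fourier transform: Fx = x. -/
open scoped BigOperators

/-- The discrete Gaussian `x[j] = Σ_{j'∈ℤ} exp(−nπ(j/n + j')²)`. -/
noncomputable def discreteGaussian (n : ℕ) [NeZero n] : ZMod n → ℂ := fun j =>
  ∑' j' : ℤ, (Real.exp (-(n : ℝ) * Real.pi * ((j.val : ℝ) / (n : ℝ) + (j' : ℝ)) ^ 2) : ℂ)

open Complex in
/-- The equivalence `ZMod n × ℤ ≃ ℤ`, `(j, m) ↦ j.val + m * n`. -/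
def zmodIntEquiv (n : ℕ) [NeZero n] : ZMod n × ℤ ≃ ℤ where
  toFun p := (p.1.val : ℤ) + p.2 * n
  invFun t := ((t : ZMod n), t / n)
  left_inv := by
    rintro ⟨j, m⟩
    have hn : (n : ℤ) ≠ 0 := by exact_mod_cast NeZero.ne n
    refine Prod.ext ?_ ?_
    · show (((j.val : ℤ) + m * n : ℤ) : ZMod n) = j
      push_cast
      simp [ZMod.natCast_val, ZMod.cast_id, ZMod.natCast_self]
    · show ((j.val : ℤ) + m * n) / n = m
      rw [Int.add_mul_ediv_right _ _ hn,
        Int.ediv_eq_zero_of_lt (by positivity) (by exact_mod_cast ZMod.val_lt j), zero_add]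
  right_inv := by
    intro t
    show ((t : ZMod n).val : ℤ) + t / n * n = t
    rw [ZMod.val_intCast, Int.emod_add_ediv_mul]

open Complex in
private lemma gauss_term_eq (n : ℕ) [NeZero n] (k j : ZMod n) (m : ℤ) :
    (Real.exp (-(n : ℝ) * Real.pi * ((j.val : ℝ) / (n : ℝ) + (m : ℝ)) ^ 2) : ℂ) *
      Complex.exp (-(2 * (Real.pi : ℂ) * Complex.I * (j.val : ℂ) * (k.val : ℂ)) / (n : ℂ)) =
    Complex.exp (-(Real.pi : ℂ) * (1 / (n : ℂ)) * (((j.val : ℤ) + m * n : ℤ) : ℂ) ^ 2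
      + 2 * (Real.pi : ℂ) * (-(Complex.I * (k.val : ℂ)) / (n : ℂ))
        * (((j.val : ℤ) + m * n : ℤ) : ℂ)) := by
  have hn : (n : ℂ) ≠ 0 := Nat.cast_ne_zero.2 (NeZero.ne n)
  rw [Complex.ofReal_exp,
    show -(Real.pi : ℂ) * (1 / (n : ℂ)) * (((j.val : ℤ) + m * n : ℤ) : ℂ) ^ 2
      + 2 * (Real.pi : ℂ) * (-(Complex.I * (k.val : ℂ)) / (n : ℂ))
        * (((j.val : ℤ) + m * n : ℤ) : ℂ)
      = ((-(n : ℝ) * Real.pi * ((j.val : ℝ) / (n : ℝ) + (m : ℝ)) ^ 2 : ℝ) : ℂ)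
        + -(2 * (Real.pi : ℂ) * Complex.I * (j.val : ℂ) * (k.val : ℂ)) / (n : ℂ)
        + ((-(m * (k.val : ℤ)) : ℤ) : ℂ) * (2 * (Real.pi : ℂ) * Complex.I) from by
      push_cast
      field_simp
      ring]
  rw [Complex.exp_add, Complex.exp_int_mul_two_pi_mul_I, mul_one, Complex.exp_add]

/-- The discrete Gaussian is fixed by the unitary discrete Fourier transform. -/
theorem dft_discreteGaussian (n : ℕ) [NeZero n] :
    dft n (discreteGaussian n) = discreteGaussian n := by
  funext k
  have hn : (n : ℂ) ≠ 0 := Nat.cast_ne_zero.2 (NeZero.ne n)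
  have hn0 : (0 : ℝ) < n := by exact_mod_cast Nat.pos_of_ne_zero (NeZero.ne n)
  set f : ℤ → ℂ := fun t => Complex.exp (-(Real.pi : ℂ) * (1 / (n : ℂ)) * (t : ℂ) ^ 2
    + 2 * (Real.pi : ℂ) * (-(Complex.I * (k.val : ℂ)) / (n : ℂ)) * (t : ℂ)) with hf
  -- summability of `f`
  have hsum : Summable f := by
    have h : Summable fun t : ℤ =>
        jacobiTheta₂_term t (-((k.val : ℂ) / (n : ℂ))) (((n : ℝ)⁻¹ : ℝ) * Complex.I) := by
      refine (summable_jacobiTheta₂_term_iff _ _).2 ?_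
      simp [Complex.mul_im]
      exact Nat.pos_of_ne_zero (NeZero.ne n)
    refine h.congr fun t => ?_
    rw [jacobiTheta₂_term, hf]
    congr 1
    push_cast
    field_simp
    ring_nf
    rw [Complex.I_sq]
    ring
  -- rewrite each term of the DFT sum
  have step1 : ∀ j : ZMod n,
      (∑' m : ℤ, (Real.exp (-(n : ℝ) * Real.pi * ((j.val : ℝ) / (n : ℝ) + (m : ℝ)) ^ 2) : ℂ)) *
        Complex.exp (-(2 * (Real.pi : ℂ) * Complex.I * (j.val : ℂ) * (k.val : ℂ)) / (n : ℂ)) =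
      ∑' m : ℤ, f ((j.val : ℤ) + m * n) := by
    intro j
    rw [← tsum_mul_right]
    exact tsum_congr fun m => gauss_term_eq n k j m
  -- reindex the double sum
  have hsum' : Summable (f ∘ zmodIntEquiv n) := (zmodIntEquiv n).summable_iff.2 hsum
  have step2 : ∑ j : ZMod n, ∑' m : ℤ, f ((j.val : ℤ) + m * n) = ∑' t : ℤ, f t := by
    have h2 := Summable.tsum_prod hsum'
    rw [tsum_fintype (fun j : ZMod n => ∑' m : ℤ, (f ∘ zmodIntEquiv n) (j, m))] at h2
    have h1 : ∑' p : ZMod n × ℤ, (f ∘ zmodIntEquiv n) p = ∑' t : ℤ, f t :=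
      (zmodIntEquiv n).tsum_eq f
    rw [← h1, h2]
    rfl
  -- apply the theta transformation formula
  have ha : 0 < (1 / (n : ℂ)).re := by
    rw [show (1 / (n : ℂ)) = (((1 / (n : ℝ)) : ℝ) : ℂ) by push_cast; ring, Complex.ofReal_re]
    positivity
  have step3 := Complex.tsum_exp_neg_quadratic ha (-(Complex.I * (k.val : ℂ)) / (n : ℂ))
  -- simplify the right-hand side of the theta transformation
  have hinner : ∀ m : ℤ,
      Complex.exp (-(Real.pi : ℂ) / (1 / (n : ℂ)) *
        ((m : ℂ) + Complex.I * (-(Complex.I * (k.val : ℂ)) / (n : ℂ))) ^ 2) =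
      (Real.exp (-(n : ℝ) * Real.pi * ((k.val : ℝ) / (n : ℝ) + (m : ℝ)) ^ 2) : ℂ) := by
    intro m
    rw [Complex.ofReal_exp]
    congr 1
    push_cast
    field_simp
    ring_nf
    simp only [Complex.I_pow_four, Complex.I_sq]
    ring
  have hc : ((1 : ℂ) / (n : ℂ)) ^ (1 / 2 : ℂ) = ((1 / Real.sqrt n : ℝ) : ℂ) := by
    rw [show ((1 : ℂ) / (n : ℂ)) = (((1 / (n : ℝ)) : ℝ) : ℂ) by push_cast; ring,
      show ((1 / 2 : ℂ)) = (((1 / 2 : ℝ) : ℝ) : ℂ) by norm_num,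
      ← Complex.ofReal_cpow (by positivity)]
    rw [← Real.sqrt_eq_rpow, one_div, Real.sqrt_inv, ← one_div]
  have hs : Real.sqrt n ≠ 0 := by positivity
  show ((1 / Real.sqrt n : ℝ) : ℂ) * ∑ j : ZMod n,
      (∑' m : ℤ, (Real.exp (-(n : ℝ) * Real.pi * ((j.val : ℝ) / (n : ℝ) + (m : ℝ)) ^ 2) : ℂ)) *
        Complex.exp (-(2 * (Real.pi : ℂ) * Complex.I * (j.val : ℂ) * (k.val : ℂ)) / (n : ℂ)) = _
  calc ((1 / Real.sqrt n : ℝ) : ℂ) * ∑ j : ZMod n,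
      (∑' m : ℤ, (Real.exp (-(n : ℝ) * Real.pi * ((j.val : ℝ) / (n : ℝ) + (m : ℝ)) ^ 2) : ℂ)) *
        Complex.exp (-(2 * (Real.pi : ℂ) * Complex.I * (j.val : ℂ) * (k.val : ℂ)) / (n : ℂ))
      = ((1 / Real.sqrt n : ℝ) : ℂ) * ∑ j : ZMod n, ∑' m : ℤ, f ((j.val : ℤ) + m * n) := by
        rw [Finset.sum_congr rfl fun j _ => step1 j]
    _ = ((1 / Real.sqrt n : ℝ) : ℂ) * ∑' t : ℤ, f t := by rw [step2]
    _ = ((1 / Real.sqrt n : ℝ) : ℂ) * (1 / ((1 : ℂ) / (n : ℂ)) ^ (1 / 2 : ℂ) *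
          ∑' m : ℤ, Complex.exp (-(Real.pi : ℂ) / (1 / (n : ℂ)) *
            ((m : ℂ) + Complex.I * (-(Complex.I * (k.val : ℂ)) / (n : ℂ))) ^ 2)) := by
        rw [hf]; exact congrArg _ step3
    _ = ∑' m : ℤ, (Real.exp (-(n : ℝ) * Real.pi * ((k.val : ℝ) / (n : ℝ) + (m : ℝ)) ^ 2) : ℂ) := by
        rw [tsum_congr hinner, hc, ← mul_assoc, mul_one_div,
          div_self (Complex.ofReal_ne_zero.2 (one_div_ne_zero hs)), one_mul]
end
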